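/- With P_n, Q_n as in the recurrence q^{2n+ν+1}y_{n+1} - q^{2n}(1+q^{2ν})y_n + q^{2n+ν-1}y_{n-1} = λ y_n, initial conditions (P_{-1},P_0)=(0,1), (Q_{-1},Q_0)=(-1,0), one has for all n ≥ 0 and λ ∈ ℂ: j_ν(q^{-n}λ; q²) = q^{n(ν+1)}[j_ν(λ;q²)P_n(-λ²) - q^{ν+1}j_ν(qλ;q²)Q_n(-λ²)]. -/

import Mathlib

open scoped BigOperators

noncomputable def qPochC (q a : ℂ) (n : ℕ) : ℂ := ∏ i ∈ Finset.range n, (1 - a * q ^ i)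

noncomputable def jC (q ν : ℝ) (x : ℂ) : ℂ :=
  ∑' n : ℕ, (-1) ^ n * (q : ℂ) ^ (n * (n + 1)) * x ^ (2 * n) /
    (qPochC ((q : ℂ) ^ 2) ((q : ℂ) ^ 2) n *
      qPochC ((q : ℂ) ^ 2) (((q ^ (2 * ν + 2) : ℝ) : ℂ)) n)

namespace Stmt10Aux

noncomputable def cc (q ν : ℝ) (n : ℕ) : ℂ :=
  (-1) ^ n * (q : ℂ) ^ (n * (n + 1)) /
    (qPochC ((q : ℂ) ^ 2) ((q : ℂ) ^ 2) n *
      qPochC ((q : ℂ) ^ 2) (((q ^ (2 * ν + 2) : ℝ) : ℂ)) n)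

lemma jC_eq (q ν : ℝ) (x : ℂ) : jC q ν x = ∑' n, cc q ν n * x ^ (2 * n) :=
  tsum_congr fun n => by rw [cc]; ring

variable {q ν : ℝ}

lemma rpow_ne_one (hq0 : 0 < q) (hq1 : q < 1) {e : ℝ} (he : e ≠ 0) : q ^ e ≠ 1 := by
  rcases lt_or_gt_of_ne he with h | h
  · exact ne_of_gt (Real.one_lt_rpow_of_pos_of_lt_one_of_neg hq0 hq1 h)
  · exact ne_of_lt (Real.rpow_lt_one hq0.le hq1 h)

lemma hD1 (hq0 : 0 < q) (hq1 : q < 1) (n : ℕ) :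
    qPochC ((q : ℂ) ^ 2) ((q : ℂ) ^ 2) n ≠ 0 := by
  rw [qPochC]
  apply Finset.prod_ne_zero_iff.mpr
  intro i _
  have h1 : ((q:ℂ)^2) * ((q:ℂ)^2)^i = (((q^2 * (q^2)^i : ℝ)) : ℂ) := by push_cast; ring
  rw [h1, show (1:ℂ) = ((1:ℝ):ℂ) from rfl, ← Complex.ofReal_sub]
  rw [Complex.ofReal_ne_zero]
  have : q^2 * (q^2)^i < 1 := by
    have hq2 : q^2 < 1 := by nlinarith
    have h2 : (q^2)^i ≤ 1 := pow_le_one₀ (by positivity) hq2.le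
    nlinarith [pow_pos (show (0:ℝ) < q^2 by positivity) i]
  linarith [this]

lemma factor2_ne (hq0 : 0 < q) (hq1 : q < 1) (hνnotint : ∀ k : ℤ, ν ≠ (k : ℝ)) (i : ℕ) :
    q ^ (2*ν+2) * (q^2)^i ≠ 1 := by
  have h1 : q ^ (2*ν+2) * (q^2)^i = q ^ (2*ν+2+2*i) := by
    rw [← Real.rpow_natCast (q^2) i, ← Real.rpow_natCast q 2, ← Real.rpow_mul hq0.le,
      ← Real.rpow_add hq0]
    norm_num
  rw [h1]
  apply rpow_ne_one hq0 hq1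
  intro h
  have : ν = ((-1 - i : ℤ) : ℝ) := by push_cast; linarith
  exact hνnotint _ this

lemma hD2 (hq0 : 0 < q) (hq1 : q < 1) (hνnotint : ∀ k : ℤ, ν ≠ (k : ℝ)) (n : ℕ) :
    qPochC ((q : ℂ) ^ 2) (((q ^ (2 * ν + 2) : ℝ) : ℂ)) n ≠ 0 := by
  rw [qPochC]
  apply Finset.prod_ne_zero_iff.mpr
  intro i _
  have h1 : (((q ^ (2*ν+2) : ℝ)):ℂ) * ((q:ℂ)^2)^i = (((q^(2*ν+2) * (q^2)^i : ℝ)) : ℂ) := by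
    push_cast; ring
  rw [h1, show (1:ℂ) = ((1:ℝ):ℂ) from rfl, ← Complex.ofReal_sub, Complex.ofReal_ne_zero]
  have := factor2_ne hq0 hq1 hνnotint (ν := ν) i
  intro h; apply this; linarith

lemma term_succ (hq0 : 0 < q) (hq1 : q < 1) (hνnotint : ∀ k : ℤ, ν ≠ (k : ℝ)) (x : ℂ) (n : ℕ) :
    cc q ν (n+1) * x ^ (2*(n+1)) = (cc q ν n * x ^ (2*n)) *
      ((-((q:ℂ)^2) * x^2 * ((q:ℂ)^2)^n) /
        ((1 - (q:ℂ)^2 * ((q:ℂ)^2)^n) * (1 - (((q ^ (2*ν+2) : ℝ)):ℂ) * ((q:ℂ)^2)^n))) := by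
  have d1 := hD1 hq0 hq1 n
  have d2 := hD2 hq0 hq1 hνnotint n
  have f1 : (1 - (q:ℂ)^2 * ((q:ℂ)^2)^n) ≠ 0 := by
    have := hD1 hq0 hq1 (n+1)
    rw [qPochC, Finset.prod_range_succ] at this
    exact fun h => this (by rw [← qPochC, h, mul_zero])
  have f2 : (1 - (((q ^ (2*ν+2) : ℝ)):ℂ) * ((q:ℂ)^2)^n) ≠ 0 := by
    have := hD2 hq0 hq1 hνnotint (n+1)
    rw [qPochC, Finset.prod_range_succ] at this
    exact fun h => this (by rw [← qPochC, h, mul_zero])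
  rw [cc, cc, qPochC, qPochC, Finset.prod_range_succ, Finset.prod_range_succ, ← qPochC, ← qPochC]
  have e1 : (n+1)*(n+1+1) = n*(n+1) + (2*n+2) := by ring
  rw [e1, pow_add]
  field_simp
  ring

lemma summable_term (hq0 : 0 < q) (hq1 : q < 1) (hνnotint : ∀ k : ℤ, ν ≠ (k : ℝ)) (x : ℂ) :
    Summable (fun n => cc q ν n * x ^ (2*n)) := by
  set c2 : ℂ := (((q ^ (2*ν+2) : ℝ)):ℂ) with hc2
  set r : ℕ → ℂ := fun n => (-((q:ℂ)^2) * x^2 * ((q:ℂ)^2)^n) /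
      ((1 - (q:ℂ)^2 * ((q:ℂ)^2)^n) * (1 - c2 * ((q:ℂ)^2)^n)) with hr
  have hqn : ‖(q:ℂ)^2‖ < 1 := by
    rw [norm_pow, Complex.norm_real, Real.norm_eq_abs, abs_of_pos hq0]
    nlinarith
  have hpow : Filter.Tendsto (fun n : ℕ => ((q:ℂ)^2)^n) Filter.atTop (nhds 0) :=
    tendsto_pow_atTop_nhds_zero_of_norm_lt_one hqn
  have hnum : Filter.Tendsto (fun n : ℕ => -((q:ℂ)^2) * x^2 * ((q:ℂ)^2)^n) Filter.atTop (nhds 0) := by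
    have h := hpow.const_mul (-((q:ℂ)^2) * x^2)
    rw [mul_zero] at h
    exact h
  have hden : Filter.Tendsto
      (fun n : ℕ => (1 - (q:ℂ)^2 * ((q:ℂ)^2)^n) * (1 - c2 * ((q:ℂ)^2)^n))
      Filter.atTop (nhds 1) := by
    have h1 : Filter.Tendsto (fun n : ℕ => 1 - (q:ℂ)^2 * ((q:ℂ)^2)^n) Filter.atTop (nhds 1) := by
      simpa using (tendsto_const_nhds (x := (1:ℂ))).sub (hpow.const_mul ((q:ℂ)^2))
    have h2 : Filter.Tendsto (fun n : ℕ => 1 - c2 * ((q:ℂ)^2)^n) Filter.atTop (nhds 1) := by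
      simpa using (tendsto_const_nhds (x := (1:ℂ))).sub (hpow.const_mul c2)
    simpa using h1.mul h2
  have hrl : Filter.Tendsto r Filter.atTop (nhds 0) := by
    have h := hnum.div hden one_ne_zero
    rw [zero_div] at h
    exact h
  have hrn : Filter.Tendsto (fun n => ‖r n‖) Filter.atTop (nhds 0) := by
    simpa using hrl.norm
  have hev : ∀ᶠ n in Filter.atTop, ‖r n‖ ≤ 1/2 :=
    hrn.eventually_le_const (by norm_num)
  apply summable_of_ratio_norm_eventually_le (r := 1/2) (by norm_num)
  filter_upwards [hev] with n hn
  rw [term_succ hq0 hq1 hνnotint x n, norm_mul]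
  calc ‖cc q ν n * x ^ (2*n)‖ * ‖r n‖ ≤ ‖cc q ν n * x ^ (2*n)‖ * (1/2) := by
        gcongr
    _ = 1/2 * ‖cc q ν n * x ^ (2*n)‖ := by ring


lemma fac1_ne (hq0 : 0 < q) (hq1 : q < 1) (n : ℕ) : (1 - (q:ℂ)^2 * ((q:ℂ)^2)^n) ≠ 0 := by
  have := hD1 hq0 hq1 (n+1)
  rw [qPochC, Finset.prod_range_succ] at this
  exact fun h => this (by rw [← qPochC, h, mul_zero])

lemma fac2_ne (hq0 : 0 < q) (hq1 : q < 1) (hνnotint : ∀ k : ℤ, ν ≠ (k : ℝ)) (n : ℕ) :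
    (1 - (((q ^ (2*ν+2) : ℝ)):ℂ) * ((q:ℂ)^2)^n) ≠ 0 := by
  have := hD2 hq0 hq1 hνnotint (n+1)
  rw [qPochC, Finset.prod_range_succ] at this
  exact fun h => this (by rw [← qPochC, h, mul_zero])

lemma hc2b (hq0 : 0 < q) : (((q ^ (2*ν+2) : ℝ)):ℂ) = (((q ^ (2*ν) : ℝ)):ℂ) * (q:ℂ)^2 := by
  rw [show (2*ν+2 : ℝ) = 2*ν + ((2:ℕ):ℝ) by norm_num, Real.rpow_add hq0, Real.rpow_natCast]
  push_cast
  ring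

lemma master (hq0 : 0 < q) (hq1 : q < 1) (hνnotint : ∀ k : ℤ, ν ≠ (k : ℝ)) (x : ℂ) :
    jC q ν ((q:ℂ)⁻¹ * x) = (1 + (((q ^ (2*ν) : ℝ)):ℂ)) * jC q ν x
      - (((q ^ (2*ν) : ℝ)):ℂ) * jC q ν ((q:ℂ) * x) - x^2 * jC q ν x := by
  have hq : (q:ℂ) ≠ 0 := by exact_mod_cast hq0.ne'
  have S1 := summable_term hq0 hq1 hνnotint ((q:ℂ)⁻¹*x)
  have S2 := summable_term hq0 hq1 hνnotint x
  have S3 := summable_term hq0 hq1 hνnotint ((q:ℂ)*x)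
  set g : ℕ → ℂ := fun n => cc q ν n * ((q:ℂ)⁻¹*x)^(2*n)
      + (((q ^ (2*ν) : ℝ)):ℂ)*(cc q ν n * ((q:ℂ)*x)^(2*n))
      - (1+(((q ^ (2*ν) : ℝ)):ℂ))*(cc q ν n * x^(2*n)) with hg
  have hsg : Summable g :=
    (S1.add (S3.mul_left _)).sub (S2.mul_left (1+(((q ^ (2*ν) : ℝ)):ℂ)))
  have h0 : g 0 = 0 := by simp only [hg, mul_zero, pow_zero, mul_one]; ring
  have hkey : ∀ n, g (n+1) = -x^2 * (cc q ν n * x^(2*n)) := by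
    intro n
    have hf1 := fac1_ne hq0 hq1 n
    have hf2 := fac2_ne hq0 hq1 hνnotint n
    have hD : ((1 - (q:ℂ)^2 * ((q:ℂ)^2)^n) *
        (1 - (((q ^ (2*ν+2) : ℝ)):ℂ) * ((q:ℂ)^2)^n)) ≠ 0 := mul_ne_zero hf1 hf2
    simp only [hg]
    rw [term_succ hq0 hq1 hνnotint ((q:ℂ)⁻¹*x) n, term_succ hq0 hq1 hνnotint ((q:ℂ)*x) n,
      term_succ hq0 hq1 hνnotint x n]
    simp only [← mul_div_assoc]
    rw [← add_div, ← sub_div, div_eq_iff hD, hc2b hq0]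
    field_simp
    have hinv : (q:ℂ)^(n*2) * ((q:ℂ)⁻¹)^(n*2) = 1 := by rw [← mul_pow, mul_inv_cancel₀ hq, one_pow]
    linear_combination (-(cc q ν n * x^2 * x^(n*2))) * hinv
  have t1 : ∑' n, g n = jC q ν ((q:ℂ)⁻¹*x) + (((q ^ (2*ν) : ℝ)):ℂ) * jC q ν ((q:ℂ)*x)
      - (1+(((q ^ (2*ν) : ℝ)):ℂ)) * jC q ν x := by
    have h := Summable.tsum_sub (S1.add (S3.mul_left (((q ^ (2*ν) : ℝ)):ℂ)))
      (S2.mul_left (1+(((q ^ (2*ν) : ℝ)):ℂ)))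
    rw [Summable.tsum_add S1 (S3.mul_left _), tsum_mul_left, tsum_mul_left] at h
    rw [jC_eq, jC_eq, jC_eq]
    exact h
  have t2 : ∑' n, g n = -x^2 * jC q ν x := by
    rw [Summable.tsum_eq_zero_add hsg, h0, zero_add]
    calc ∑' n, g (n+1) = ∑' n, -x^2 * (cc q ν n * x^(2*n)) := tsum_congr fun n => hkey n
      _ = -x^2 * ∑' n, (cc q ν n * x^(2*n)) := tsum_mul_left
      _ = -x^2 * jC q ν x := by rw [jC_eq]
  linear_combination t2 - t1


lemma hcoe_mul (hq0 : 0 < q) (m : ℕ) (c : ℝ) :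
    ((q ^ (2*(m:ℝ) + c) : ℝ) : ℂ) = (q:ℂ)^(2*m) * ((q^c : ℝ):ℂ) := by
  rw [show 2*(m:ℝ)+c = ((2*m : ℕ):ℝ) + c by push_cast; ring, Real.rpow_add hq0,
    Real.rpow_natCast]
  push_cast; ring

lemma hcoe_nat (m : ℕ) : ((q ^ (2*(m:ℝ)) : ℝ) : ℂ) = (q:ℂ)^(2*m) := by
  rw [show 2*(m:ℝ) = ((2*m : ℕ):ℝ) by push_cast; ring, Real.rpow_natCast]
  push_cast; ring

lemma han (hq0 : 0 < q) (m : ℕ) :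
    ((q ^ ((m:ℝ)*(ν+1)) : ℝ) : ℂ) = (((q^(ν+1) : ℝ)):ℂ)^m := by
  rw [mul_comm, Real.rpow_mul hq0.le, Real.rpow_natCast]
  push_cast; ring

lemma hadb (hq0 : 0 < q) :
    (((q^(ν+1):ℝ)):ℂ) * (((q^(ν-1):ℝ)):ℂ) = (((q^(2*ν):ℝ)):ℂ) := by
  rw [← Complex.ofReal_mul, ← Real.rpow_add hq0]
  norm_num
  ring_nf

end Stmt10Aux

theorem stmt10 (q ν : ℝ) (hq0 : 0 < q) (hq1 : q < 1) (hν : -1 < ν)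
    (hνnotint : ∀ k : ℤ, ν ≠ (k : ℝ))
    (P Q : ℤ → ℂ → ℂ)
    (hPinit : ∀ μ : ℂ, P (-1) μ = 0 ∧ P 0 μ = 1)
    (hQinit : ∀ μ : ℂ, Q (-1) μ = -1 ∧ Q 0 μ = 0)
    (hPrec : ∀ (n : ℕ) (μ : ℂ),
        ((q ^ (2 * (n : ℝ) + ν + 1) : ℝ) : ℂ) * P ((n : ℤ) + 1) μ
        - ((q ^ (2 * (n : ℝ)) : ℝ) : ℂ) * (1 + ((q ^ (2 * ν) : ℝ) : ℂ)) * P (n : ℤ) μ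
        + ((q ^ (2 * (n : ℝ) + ν - 1) : ℝ) : ℂ) * P ((n : ℤ) - 1) μ = μ * P (n : ℤ) μ)
    (hQrec : ∀ (n : ℕ) (μ : ℂ),
        ((q ^ (2 * (n : ℝ) + ν + 1) : ℝ) : ℂ) * Q ((n : ℤ) + 1) μ
        - ((q ^ (2 * (n : ℝ)) : ℝ) : ℂ) * (1 + ((q ^ (2 * ν) : ℝ) : ℂ)) * Q (n : ℤ) μ
        + ((q ^ (2 * (n : ℝ) + ν - 1) : ℝ) : ℂ) * Q ((n : ℤ) - 1) μ = μ * Q (n : ℤ) μ) :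
    ∀ (n : ℕ) (lam : ℂ),
      jC q ν ((q : ℂ) ^ (-(n : ℤ)) * lam) =
        ((q ^ ((n : ℝ) * (ν + 1)) : ℝ) : ℂ) *
          (jC q ν lam * P (n : ℤ) (-lam ^ 2)
            - ((q ^ (ν + 1) : ℝ) : ℂ) * jC q ν ((q : ℂ) * lam) * Q (n : ℤ) (-lam ^ 2)) := by
  have hq : (q:ℂ) ≠ 0 := by exact_mod_cast hq0.ne'
  have hP : ∀ (n:ℕ) (μ:ℂ), (q:ℂ)^(2*n) * (((q^(ν+1):ℝ)):ℂ) * P ((n:ℤ)+1) μ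
      - (q:ℂ)^(2*n) * (1 + (((q^(2*ν):ℝ)):ℂ)) * P (n:ℤ) μ
      + (q:ℂ)^(2*n) * (((q^(ν-1):ℝ)):ℂ) * P ((n:ℤ)-1) μ = μ * P (n:ℤ) μ := by
    intro n μ
    have h := hPrec n μ
    rw [show (2*(n:ℝ)+ν+1) = 2*(n:ℝ)+(ν+1) by ring, show (2*(n:ℝ)+ν-1) = 2*(n:ℝ)+(ν-1) by ring,
      Stmt10Aux.hcoe_mul hq0 n (ν+1), Stmt10Aux.hcoe_mul hq0 n (ν-1), Stmt10Aux.hcoe_nat n] at h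
    exact h
  have hQ : ∀ (n:ℕ) (μ:ℂ), (q:ℂ)^(2*n) * (((q^(ν+1):ℝ)):ℂ) * Q ((n:ℤ)+1) μ
      - (q:ℂ)^(2*n) * (1 + (((q^(2*ν):ℝ)):ℂ)) * Q (n:ℤ) μ
      + (q:ℂ)^(2*n) * (((q^(ν-1):ℝ)):ℂ) * Q ((n:ℤ)-1) μ = μ * Q (n:ℤ) μ := by
    intro n μ
    have h := hQrec n μ
    rw [show (2*(n:ℝ)+ν+1) = 2*(n:ℝ)+(ν+1) by ring, show (2*(n:ℝ)+ν-1) = 2*(n:ℝ)+(ν-1) by ring,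
      Stmt10Aux.hcoe_mul hq0 n (ν+1), Stmt10Aux.hcoe_mul hq0 n (ν-1), Stmt10Aux.hcoe_nat n] at h
    exact h
  intro n
  induction n using Nat.twoStepInduction with
  | zero =>
    intro lam
    simp only [Nat.cast_zero, neg_zero, zpow_zero, one_mul, zero_mul, Real.rpow_zero,
      Complex.ofReal_one, (hPinit (-lam^2)).2, (hQinit (-lam^2)).2]
    ring
  | one =>
    intro lam
    have hm := Stmt10Aux.master hq0 hq1 hνnotint lam
    have hP0 := hP 0 (-lam^2)
    have hQ0 := hQ 0 (-lam^2)
    norm_num at hP0 hQ0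
    rw [(hPinit (-lam^2)).1] at hP0
    rw [(hQinit (-lam^2)).1] at hQ0
    rw [(hPinit (-lam^2)).2] at hP0
    rw [(hQinit (-lam^2)).2] at hQ0
    rw [show (-((1:ℕ):ℤ)) = (-1:ℤ) by norm_num, zpow_neg_one,
      show ((1:ℕ):ℝ) = (1:ℝ) by norm_num, show (1:ℝ)*(ν+1) = ν+1 by ring,
      show ((1:ℕ):ℤ) = (1:ℤ) by norm_num]
    linear_combination hm - jC q ν lam * hP0 + (((q^(ν+1):ℝ)):ℂ) * jC q ν ((q:ℂ)*lam) * hQ0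
      + jC q ν ((q:ℂ)*lam) * Stmt10Aux.hadb (ν := ν) hq0
  | more k IH1 IH2 =>
    intro lam
    have hm := Stmt10Aux.master hq0 hq1 hνnotint ((q:ℂ)^(-((k:ℤ)+1)) * lam)
    have h1 : (q:ℂ)^(-((k:ℤ)+2)) = (q:ℂ)⁻¹ * (q:ℂ)^(-((k:ℤ)+1)) := by
      rw [show (-((k:ℤ)+2)) = (-1) + -((k:ℤ)+1) by ring, zpow_add₀ hq, zpow_neg_one]
    have h2 : (q:ℂ)^(-(k:ℤ)) = (q:ℂ) * (q:ℂ)^(-((k:ℤ)+1)) := by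
      rw [show (-(k:ℤ)) = 1 + -((k:ℤ)+1) by ring, zpow_add₀ hq, zpow_one]
    rw [← mul_assoc, ← mul_assoc, ← h1, ← h2] at hm
    have hsq : ((q:ℂ)^(-((k:ℤ)+1)) * lam)^2 * (q:ℂ)^(2*k+2) = lam^2 := by
      have e1 : ((q:ℂ)^(-((k:ℤ)+1)))^2 = (q:ℂ)^(-(2*(k:ℤ)+2)) := by
        rw [← zpow_natCast ((q:ℂ)^(-((k:ℤ)+1))) 2, ← zpow_mul]
        congr 1
        push_cast; try ring
      have e2 : (q:ℂ)^(2*k+2) = (q:ℂ)^((2*(k:ℤ)+2)) := by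
        rw [← zpow_natCast (q:ℂ) (2*k+2)]
        norm_num
      rw [mul_pow, e1, e2, mul_comm (((q:ℂ))^(-(2*(k:ℤ)+2))) (lam^2), mul_assoc,
        ← zpow_add₀ hq, show (-(2*(k:ℤ)+2) + (2*(k:ℤ)+2)) = 0 by ring, zpow_zero, mul_one]
    have I1 := IH1 lam
    rw [Stmt10Aux.han hq0 k] at I1
    have I2 := IH2 lam
    rw [Stmt10Aux.han hq0 (k+1), show (((k+1:ℕ)):ℤ) = (k:ℤ)+1 by push_cast; ring] at I2
    have hP2 := hP (k+1) (-lam^2)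
    have hQ2 := hQ (k+1) (-lam^2)
    rw [show (((k+1:ℕ)):ℤ) = (k:ℤ)+1 by push_cast; ring,
      show ((k:ℤ)+1+1) = (k:ℤ)+2 by ring, show ((k:ℤ)+1-1) = (k:ℤ) by ring] at hP2 hQ2
    rw [Stmt10Aux.han hq0 (k+2), show (((k+2:ℕ)):ℤ) = (k:ℤ)+2 by push_cast; ring]
    apply mul_left_cancel₀ (pow_ne_zero (2*k+2) hq)
    linear_combination (norm := ring_nf)
      (q:ℂ)^(2*k+2) * hm - jC q ν ((q:ℂ)^(-((k:ℤ)+1)) * lam) * hsq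
      - ((((q^(ν+1):ℝ)):ℂ)^(k+1) * jC q ν lam) * hP2
      + ((((q^(ν+1):ℝ)):ℂ)^(k+2) * jC q ν ((q:ℂ)*lam)) * hQ2
      + ((q:ℂ)^(2*k+2)*(1+(((q^(2*ν):ℝ)):ℂ)) - lam^2) * I2
      + (-(q:ℂ)^(2*k+2)*(((q^(2*ν):ℝ)):ℂ)) * I1
      + ((q:ℂ)^(2*k+2) * (((q^(ν+1):ℝ)):ℂ)^k * jC q ν lam * P ((k:ℤ)) (-lam^2)
        - (q:ℂ)^(2*k+2) * (((q^(ν+1):ℝ)):ℂ)^(k+1) * jC q ν ((q:ℂ)*lam) * Q ((k:ℤ)) (-lam^2))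
          * Stmt10Aux.hadb (ν := ν) hq0
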